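/- Let t₀ be the unique real solution of t = cosh(t)·e^{-t} and set x₀ := 1/(2·t₀). Then 2 + (1 - x₀) + √((1 - x₀)(1 + 3x₀)) < 2/t₀. -/
import Mathlib


/-- With `t₀` the unique real solution of `t = cosh t * exp (-t)` and
`x₀ = 1 / (2 t₀)`, one has `2 + (1 - x₀) + √((1 - x₀)(1 + 3 x₀)) < 2 / t₀`. -/
theorem stmt8 (t₀ : ℝ) (ht : t₀ = Real.cosh t₀ * Real.exp (-t₀)) :
    2 + (1 - 1 / (2 * t₀)) +
      Real.sqrt ((1 - 1 / (2 * t₀)) * (1 + 3 * (1 / (2 * t₀)))) < 2 / t₀ := by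
  rw [Real.cosh_eq] at ht
  have h1 : Real.exp t₀ * Real.exp (-t₀) = 1 := by
    rw [← Real.exp_add]; simp
  have h2 : Real.exp (-t₀) * Real.exp (-t₀) = Real.exp (-(2 * t₀)) := by
    rw [← Real.exp_add]; ring_nf
  have key : Real.exp (-(2 * t₀)) = 2 * t₀ - 1 := by nlinarith [ht]
  have hpos := Real.exp_pos (-(2 * t₀))
  have hlb : (1 : ℝ) / 2 < t₀ := by linarith
  -- exp (1.29) > 100/29
  have he1 : (2.7182818 : ℝ) < Real.exp 1 := by
    have := Real.exp_one_gt_d9; linarith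
  have he2 : (1.145 : ℝ) ≤ Real.exp 0.145 := by
    have := Real.add_one_le_exp (0.145 : ℝ); linarith
  have he3 : (1.311025 : ℝ) ≤ Real.exp 0.29 := by
    have : Real.exp 0.29 = Real.exp 0.145 * Real.exp 0.145 := by
      rw [← Real.exp_add]; norm_num
    rw [this]; nlinarith
  have he4 : (100 / 29 : ℝ) < Real.exp 1.29 := by
    have : Real.exp 1.29 = Real.exp 1 * Real.exp 0.29 := by
      rw [← Real.exp_add]; norm_num
    rw [this]; nlinarith
  have hub : t₀ < 0.645 := by
    by_contra h
    push_neg at h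
    have hmono : Real.exp (-(2 * t₀)) ≤ Real.exp (-1.29) := by
      apply Real.exp_le_exp.2; linarith
    have hne : Real.exp (-1.29) < 0.29 := by
      rw [Real.exp_neg]
      rw [inv_lt_comm₀ (Real.exp_pos _) (by norm_num)]
      calc (0.29 : ℝ)⁻¹ = 100 / 29 := by norm_num
        _ < Real.exp 1.29 := he4
    linarith [key]
  set u : ℝ := 1 / (2 * t₀) with hu
  have ht0 : 0 < t₀ := by linarith
  have hulb : 100 / 129 < u := by
    rw [hu]
    rw [div_lt_div_iff₀ (by norm_num) (by linarith)]
    linarith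
  have huub : u < 1 := by
    rw [hu]
    rw [div_lt_one (by linarith)]
    linarith
  have hrhs : 2 / t₀ = 4 * u := by
    rw [hu]; field_simp; ring
  rw [hrhs]
  have hsq : Real.sqrt ((1 - u) * (1 + 3 * u)) < 5 * u - 3 := by
    rw [Real.sqrt_lt' (by nlinarith)]
    nlinarith [sq_nonneg (u - 100 / 129)]
  linarith
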